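/- Let μ₀ be a mass distribution on ℤ^d with finite support and κ > 0. If (V₁, u₁) and (V₂, u₂) are stabilizing pairs for BS(μ₀, κ), then there exists a function w such that (V₁ ∩ V₂, w) is a stabilizing pair for BS(μ₀, κ). Consequently, there exists a stabilizing pair (V_*, u_*) for BS(μ₀, κ) with V_* ⊆ V for every stabilizing pair (V, u). -/

import Mathlib

open Filter

namespace Sandpile

/-- Lattice sites of `ℤ^d`. -/
abbrev Site (d : ℕ) := Fin d → ℤ

/-- Two sites are neighbours iff their `ℓ¹`-distance equals `1`. -/
def nbr {d : ℕ} (x y : Site d) : Prop := (∑ i, |x i - y i|) = 1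

/-- The (combinatorial) boundary of a set `V ⊆ ℤ^d`. -/
def bdry {d : ℕ} (V : Set (Site d)) : Set (Site d) :=
  {x | x ∈ V ∧ ∃ y, nbr x y ∧ y ∉ V}

/-- The (combinatorial) interior of a set `V ⊆ ℤ^d`. -/
def intr {d : ℕ} (V : Set (Site d)) : Set (Site d) := V \ bdry V

/-- The discrete Laplacian `Δu(x) = (1/(2d)) ∑_{y ∼ x} (u y - u x)`; the `2d`
neighbours of `x` are exactly the points `x ± eᵢ`. -/
noncomputable def lap {d : ℕ} (u : Site d → ℝ) (x : Site d) : ℝ :=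
  (1 / (2 * (d : ℝ))) *
    ∑ i : Fin d, ((u (x + Pi.single i 1) - u x) + (u (x - Pi.single i 1) - u x))

/-- A mass distribution: nonnegative with finite support. -/
def IsMassDist {d : ℕ} (μ : Site d → ℝ) : Prop :=
  (∀ x, 0 ≤ μ x) ∧ (Function.support μ).Finite

/-- Euclidean norm of a lattice point. -/
noncomputable def enorm {d : ℕ} (x : Site d) : ℝ :=
  Real.sqrt (∑ i, ((x i : ℝ)) ^ 2)

/-- `(V, u)` is a stabilizing pair for `BS(μ₀, κ)`: `V` is finite, contains the support
of `μ₀`, and `u : ℤ^d → [0,∞)` vanishes outside the interior of `V`, satisfies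
`Δu = -μ₀` on the interior of `V`, `u = 0` on `∂V`, and `μ₀ + Δu ≤ κ` on `∂V`. -/
def IsStabilizingPair {d : ℕ} (μ0 : Site d → ℝ) (κ : ℝ)
    (V : Set (Site d)) (u : Site d → ℝ) : Prop :=
  V.Finite ∧ Function.support μ0 ⊆ V ∧ (∀ x, 0 ≤ u x) ∧
  (∀ x ∉ intr V, u x = 0) ∧
  (∀ x ∈ intr V, lap u x = -μ0 x) ∧
  (∀ x ∈ bdry V, u x = 0) ∧
  (∀ x ∈ bdry V, μ0 x + lap u x ≤ κ)

/-- *The* stabilizing pair of `BS(μ₀, κ)`: a stabilizing pair whose set of sites is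
contained in the set of any other stabilizing pair. -/
def IsMinStabilizingPair {d : ℕ} (μ0 : Site d → ℝ) (κ : ℝ)
    (V : Set (Site d)) (u : Site d → ℝ) : Prop :=
  IsStabilizingPair μ0 κ V u ∧
  ∀ V' u', IsStabilizingPair μ0 κ V' u' → V ⊆ V'

/-- The point mass `n·δ₀` at the origin. -/
def pointMass (d : ℕ) (n : ℝ) : Site d → ℝ := fun x => if x = 0 then n else 0

variable {d : ℕ}


lemma single_apply' (i j : Fin d) : (Pi.single i 1 : Site d) j = if j = i then 1 else 0 := by
  simp [Pi.single_apply]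

lemma nbr_add_single (x : Site d) (i : Fin d) : nbr x (x + Pi.single i 1) := by
  unfold nbr
  have h : ∀ j, |x j - (x + (Pi.single i 1 : Site d)) j| = if j = i then 1 else 0 := by
    intro j
    by_cases h : j = i <;> simp [h, Pi.add_apply, single_apply']
  simp only [h]
  simp

lemma nbr_sub_single (x : Site d) (i : Fin d) : nbr x (x - Pi.single i 1) := by
  unfold nbr
  have h : ∀ j, |x j - (x - (Pi.single i 1 : Site d)) j| = if j = i then 1 else 0 := by
    intro j
    by_cases h : j = i <;> simp [h, Pi.sub_apply, single_apply']
  simp only [h]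
  simp

lemma nbr_iff {x y : Site d} :
    nbr x y ↔ ∃ i, y = x + Pi.single i 1 ∨ y = x - Pi.single i 1 := by
  constructor
  · intro h
    unfold nbr at h
    have hex : ∃ i, x i ≠ y i := by
      by_contra hc
      push_neg at hc
      simp only [hc, sub_self, abs_zero, Finset.sum_const_zero] at h
      exact one_ne_zero h.symm
    obtain ⟨i, hi⟩ := hex
    have h1 : 1 ≤ |x i - y i| := by
      have h2 : x i - y i ≠ 0 := sub_ne_zero.mpr hi
      exact Int.one_le_abs h2
    have hrest : ∀ j ∈ Finset.univ.erase i, |x j - y j| = 0 := by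
      have hsum : |x i - y i| + ∑ j ∈ Finset.univ.erase i, |x j - y j| = 1 :=
        (Finset.add_sum_erase Finset.univ (fun j => |x j - y j|) (Finset.mem_univ i)).trans h
      have hnn : (0:ℤ) ≤ ∑ j ∈ Finset.univ.erase i, |x j - y j| :=
        Finset.sum_nonneg fun j _ => abs_nonneg _
      have hz : ∑ j ∈ Finset.univ.erase i, |x j - y j| = 0 := by omega
      intro j hj
      have := Finset.sum_eq_zero_iff_of_nonneg (fun j _ => abs_nonneg (x j - y j)) |>.mp hz j hj
      exact this
    have heq : ∀ j, j ≠ i → y j = x j := by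
      intro j hj
      have := hrest j (Finset.mem_erase.mpr ⟨hj, Finset.mem_univ j⟩)
      have := abs_eq_zero.mp this
      omega
    have habs : |x i - y i| = 1 := by
      have hsum : |x i - y i| + ∑ j ∈ Finset.univ.erase i, |x j - y j| = 1 :=
        (Finset.add_sum_erase Finset.univ (fun j => |x j - y j|) (Finset.mem_univ i)).trans h
      have hz : ∑ j ∈ Finset.univ.erase i, |x j - y j| = 0 :=
        Finset.sum_eq_zero hrest
      omega
    refine ⟨i, ?_⟩
    rcases abs_eq (by norm_num : (0:ℤ) ≤ 1) |>.mp habs with hc | hc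
    · right
      funext j
      by_cases hj : j = i
      · subst hj; simp [Pi.sub_apply, single_apply']; omega
      · simp [Pi.sub_apply, single_apply', hj, heq j hj]
    · left
      funext j
      by_cases hj : j = i
      · subst hj; simp [Pi.add_apply, single_apply']; omega
      · simp [Pi.add_apply, single_apply', hj, heq j hj]
  · rintro ⟨i, rfl | rfl⟩
    · exact nbr_add_single x i
    · exact nbr_sub_single x i



lemma lap_add (u v : Site d → ℝ) (x : Site d) :
    lap (u + v) x = lap u x + lap v x := by
  unfold lap
  rw [← mul_add, ← Finset.sum_add_distrib]
  congr 1
  apply Finset.sum_congr rfl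
  intro i _
  simp only [Pi.add_apply]
  ring

lemma lap_smul (c : ℝ) (u : Site d → ℝ) (x : Site d) :
    lap (c • u) x = c * lap u x := by
  unfold lap
  simp only [Pi.smul_apply, smul_eq_mul]
  have h1 : ∀ i : Fin d, c * u (x + Pi.single i 1) - c * u x +
      (c * u (x - Pi.single i 1) - c * u x) =
      c * ((u (x + Pi.single i 1) - u x) + (u (x - Pi.single i 1) - u x)) := fun i => by ring
  rw [Finset.sum_congr rfl (fun i _ => h1 i), ← Finset.mul_sum]
  ring

lemma lap_neg (u : Site d → ℝ) (x : Site d) : lap (-u) x = -lap u x := by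
  have := lap_smul (-1) u x
  simpa using this

lemma lap_sub (u v : Site d → ℝ) (x : Site d) :
    lap (u - v) x = lap u x - lap v x := by
  have h := lap_add (u - v) v x
  simp at h
  linarith

lemma lap_mono {u v : Site d → ℝ} (h : ∀ y, u y ≤ v y) {x : Site d} (hx : u x = v x) :
    lap u x ≤ lap v x := by
  unfold lap
  apply mul_le_mul_of_nonneg_left _ (by positivity)
  apply Finset.sum_le_sum
  intro i _
  have h1 := h (x + Pi.single i 1)
  have h2 := h (x - Pi.single i 1)
  rw [hx]
  linarith

/-- Discrete maximum principle. -/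
lemma maxPrinciple (hd : 0 < d) {D : Set (Site d)} (hD : D.Finite) (h : Site d → ℝ)
    (hsub : ∀ x ∈ D, 0 ≤ lap h x)
    (hbd : ∀ x, x ∉ D → ∀ y ∈ D, nbr y x → h x ≤ 0) :
    ∀ x ∈ D, h x ≤ 0 := by
  by_contra hc
  push_neg at hc
  obtain ⟨x₀, hx₀D, hx₀⟩ := hc
  -- take max over D
  have hne : hD.toFinset.Nonempty := ⟨x₀, hD.mem_toFinset.mpr hx₀D⟩
  obtain ⟨x₁, hx₁mem, hx₁max⟩ := Finset.exists_max_image hD.toFinset h hne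
  have hx₁D : x₁ ∈ D := hD.mem_toFinset.mp hx₁mem
  set m := h x₁ with hm
  have hmpos : 0 < m := lt_of_lt_of_le hx₀ (hx₁max x₀ (hD.mem_toFinset.mpr hx₀D))
  have hmax : ∀ y ∈ D, h y ≤ m := fun y hy => hx₁max y (hD.mem_toFinset.mpr hy)
  -- key propagation step
  have key : ∀ y ∈ D, h y = m → ∀ i : Fin d,
      ((y + Pi.single i 1) ∈ D ∧ h (y + Pi.single i 1) = m) ∧
      ((y - Pi.single i 1) ∈ D ∧ h (y - Pi.single i 1) = m) := by
    intro y hyD hym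
    have hnbr : ∀ z, nbr y z → h z ≤ m := by
      intro z hz
      by_cases hzD : z ∈ D
      · exact hmax z hzD
      · exact le_of_lt (lt_of_le_of_lt (hbd z hzD y hyD hz) hmpos)
    have hsum0 : 0 ≤ ∑ i : Fin d, ((h (y + Pi.single i 1) - h y) + (h (y - Pi.single i 1) - h y)) := by
      have := hsub y hyD
      unfold lap at this
      have hpos : (0:ℝ) < 1 / (2 * (d:ℝ)) := by positivity
      by_contra hS
      push_neg at hS
      nlinarith
    have hterm : ∀ i : Fin d,
        ((h (y + Pi.single i 1) - h y) + (h (y - Pi.single i 1) - h y)) ≤ 0 := by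
      intro i
      have h1 := hnbr _ (nbr_add_single y i)
      have h2 := hnbr _ (nbr_sub_single y i)
      rw [hym]; linarith
    have hzero : ∀ i : Fin d,
        ((h (y + Pi.single i 1) - h y) + (h (y - Pi.single i 1) - h y)) = 0 := by
      have hs : ∑ i : Fin d, ((h (y + Pi.single i 1) - h y) + (h (y - Pi.single i 1) - h y)) = 0 :=
        le_antisymm (Finset.sum_nonpos fun i _ => hterm i) hsum0
      intro i
      have := (Finset.sum_eq_zero_iff_of_nonpos (fun i _ => hterm i)).mp hs i (Finset.mem_univ i)
      exact this
    intro i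
    have h1 := hnbr _ (nbr_add_single y i)
    have h2 := hnbr _ (nbr_sub_single y i)
    have hz := hzero i
    rw [hym] at hz
    have he1 : h (y + Pi.single i 1) = m := by linarith
    have he2 : h (y - Pi.single i 1) = m := by linarith
    have hd1 : (y + Pi.single i 1) ∈ D := by
      by_contra hcd
      have := hbd _ hcd y hyD (nbr_add_single y i)
      rw [he1] at this; linarith
    have hd2 : (y - Pi.single i 1) ∈ D := by
      by_contra hcd
      have := hbd _ hcd y hyD (nbr_sub_single y i)
      rw [he2] at this; linarith
    exact ⟨⟨hd1, he1⟩, ⟨hd2, he2⟩⟩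
  -- walk in direction 0
  let i0 : Fin d := ⟨0, hd⟩
  let f : ℕ → Site d := fun k => x₁ + fun j => if j = i0 then (k:ℤ) else 0
  have hf : ∀ k, f k ∈ D ∧ h (f k) = m := by
    intro k
    induction k with
    | zero =>
      have : f 0 = x₁ := by funext j; simp [f]
      rw [this]; exact ⟨hx₁D, rfl⟩
    | succ n ih =>
      have := (key (f n) ih.1 ih.2 i0).1
      have heq : f (n+1) = f n + Pi.single i0 1 := by
        funext j
        by_cases hj : j = i0 <;> simp [f, hj, single_apply'] <;> push_cast <;> ring
      rw [heq]
      exact this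
  have hinj : Function.Injective f := by
    intro a b hab
    have := congrFun hab i0
    simp only [f, Pi.add_apply] at this
    simp at this
    exact this
  exact (Set.infinite_of_injective_forall_mem hinj (fun k => (hf k).1)) hD



/-- Extension by zero. -/
noncomputable def extZ {D : Set (Site d)} (hD : D.Finite) (g : hD.toFinset → ℝ) :
    Site d → ℝ :=
  fun x => if hx : x ∈ hD.toFinset then g ⟨x, hx⟩ else 0

lemma extZ_add {D : Set (Site d)} (hD : D.Finite) (g g' : hD.toFinset → ℝ) :
    extZ hD (g + g') = extZ hD g + extZ hD g' := by
  funext x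
  unfold extZ
  by_cases hx : x ∈ hD.toFinset <;> simp [hx]

lemma extZ_smul {D : Set (Site d)} (hD : D.Finite) (c : ℝ) (g : hD.toFinset → ℝ) :
    extZ hD (c • g) = c • extZ hD g := by
  funext x
  unfold extZ
  by_cases hx : x ∈ hD.toFinset <;> simp [hx]

/-- Solvability of the discrete Dirichlet problem on a finite set. -/
lemma dirichlet (hd : 0 < d) {D : Set (Site d)} (hD : D.Finite) (f : Site d → ℝ) :
    ∃ w : Site d → ℝ, (∀ x ∉ D, w x = 0) ∧ (∀ x ∈ D, lap w x = f x) := by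
  classical
  let T : (hD.toFinset → ℝ) →ₗ[ℝ] (hD.toFinset → ℝ) :=
    { toFun := fun g x => lap (extZ hD g) x
      map_add' := by
        intro g g'
        funext x
        simp [extZ_add hD g g', lap_add]
      map_smul' := by
        intro c g
        funext x
        simp [extZ_smul hD c g, lap_smul] }
  have hinj : Function.Injective T := by
    rw [← LinearMap.ker_eq_bot, LinearMap.ker_eq_bot']
    intro g hg
    have hg' : ∀ x : hD.toFinset, lap (extZ hD g) x = 0 := fun x => congrFun hg x
    have hlapD : ∀ x ∈ D, lap (extZ hD g) x = 0 := by
      intro x hx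
      exact hg' ⟨x, hD.mem_toFinset.mpr hx⟩
    have hout : ∀ x ∉ D, extZ hD g x = 0 := by
      intro x hx
      unfold extZ
      rw [dif_neg (by rwa [hD.mem_toFinset])]
    have hle : ∀ x ∈ D, extZ hD g x ≤ 0 := by
      apply maxPrinciple hd hD
      · intro x hx; rw [hlapD x hx]
      · intro x hx _ _ _; rw [hout x hx]
    have hge : ∀ x ∈ D, 0 ≤ extZ hD g x := by
      have := maxPrinciple hd hD (-(extZ hD g))
        (fun x hx => by rw [lap_neg, hlapD x hx, neg_zero])
        (fun x hx _ _ _ => by simp [hout x hx])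
      intro x hx
      have h2 := this x hx
      simp at h2
      exact h2
    funext x
    have hx : (x:Site d) ∈ D := hD.mem_toFinset.mp x.2
    have h0 : extZ hD g x = 0 := le_antisymm (hle x hx) (hge x hx)
    unfold extZ at h0
    rw [dif_pos x.2] at h0
    simpa using h0
  have hsurj : Function.Surjective T := LinearMap.surjective_of_injective hinj
  obtain ⟨g, hg⟩ := hsurj (fun x => f x)
  refine ⟨extZ hD g, ?_, ?_⟩
  · intro x hx
    unfold extZ
    rw [dif_neg (by rwa [hD.mem_toFinset])]
  · intro x hx
    have := congrFun hg ⟨x, hD.mem_toFinset.mpr hx⟩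
    exact this


lemma mem_intr {V : Set (Site d)} {x : Site d} :
    x ∈ intr V ↔ x ∈ V ∧ ∀ y, nbr x y → y ∈ V := by
  unfold intr bdry
  constructor
  · rintro ⟨hxV, hxb⟩
    refine ⟨hxV, fun y hy => ?_⟩
    by_contra hyV
    exact hxb ⟨hxV, y, hy, hyV⟩
  · rintro ⟨hxV, hall⟩
    exact ⟨hxV, fun ⟨_, y, hy, hyV⟩ => hyV (hall y hy)⟩

lemma intr_inter (V₁ V₂ : Set (Site d)) : intr (V₁ ∩ V₂) = intr V₁ ∩ intr V₂ := by
  ext x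
  simp only [Set.mem_inter_iff, mem_intr]
  constructor
  · rintro ⟨⟨h1, h2⟩, hall⟩
    exact ⟨⟨h1, fun y hy => (hall y hy).1⟩, ⟨h2, fun y hy => (hall y hy).2⟩⟩
  · rintro ⟨⟨h1, ha1⟩, ⟨h2, ha2⟩⟩
    exact ⟨⟨h1, h2⟩, fun y hy => ⟨ha1 y hy, ha2 y hy⟩⟩

lemma bdry_not_intr {V : Set (Site d)} {x : Site d} (hx : x ∈ bdry V) : x ∉ intr V :=
  fun h => h.2 hx

/-- Part 1: intersection of stabilizing pairs. -/
lemma inter_stabilizing (hd : 0 < d) (μ0 : Site d → ℝ) (hμ0 : IsMassDist μ0) (κ : ℝ)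
    (hκ : 0 < κ) (V₁ V₂ : Set (Site d)) (u₁ u₂ : Site d → ℝ)
    (h₁ : IsStabilizingPair μ0 κ V₁ u₁) (h₂ : IsStabilizingPair μ0 κ V₂ u₂) :
    ∃ w : Site d → ℝ, IsStabilizingPair μ0 κ (V₁ ∩ V₂) w := by
  classical
  obtain ⟨hV₁f, hsupp₁, hu₁nn, hu₁out, hu₁lap, hu₁bd, hu₁κ⟩ := h₁
  obtain ⟨hV₂f, hsupp₂, hu₂nn, hu₂out, hu₂lap, hu₂bd, hu₂κ⟩ := h₂
  set D : Set (Site d) := intr (V₁ ∩ V₂) with hDdef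
  have hDsub : D ⊆ V₁ ∩ V₂ := fun x hx => hx.1
  have hDfin : D.Finite := (hV₁f.inter_of_left V₂).subset hDsub
  obtain ⟨w, hwout, hwlap⟩ := dirichlet hd hDfin (fun x => -μ0 x)
  have hDi : D = intr V₁ ∩ intr V₂ := intr_inter V₁ V₂
  -- nonnegativity of w
  have hwnn : ∀ x, 0 ≤ w x := by
    have hmp := maxPrinciple hd hDfin (-w)
      (fun x hx => by rw [lap_neg, hwlap x hx]; simpa using hμ0.1 x)
      (fun x hx _ _ _ => by simp [hwout x hx])
    intro x
    by_cases hx : x ∈ D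
    · have := hmp x hx; simp at this; exact this
    · rw [hwout x hx]
  -- w ≤ u₁ and w ≤ u₂
  have hwle : ∀ (V : Set (Site d)) (u : Site d → ℝ), D ⊆ intr V →
      (∀ x, 0 ≤ u x) → (∀ x ∈ intr V, lap u x = -μ0 x) → ∀ x, w x ≤ u x := by
    intro V u hDV hunn hulap
    have hmp := maxPrinciple hd hDfin (w - u)
      (fun x hx => by
        rw [lap_sub, hwlap x hx, hulap x (hDV hx)]; simp)
      (fun x hx _ _ _ => by
        simp only [Pi.sub_apply]
        rw [hwout x hx]
        simpa using hunn x)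
    intro x
    by_cases hx : x ∈ D
    · have := hmp x hx; simp only [Pi.sub_apply] at this; linarith
    · rw [hwout x hx]; exact hunn x
  have hwle₁ : ∀ x, w x ≤ u₁ x :=
    hwle V₁ u₁ (by rw [hDi]; exact Set.inter_subset_left) hu₁nn hu₁lap
  have hwle₂ : ∀ x, w x ≤ u₂ x :=
    hwle V₂ u₂ (by rw [hDi]; exact Set.inter_subset_right) hu₂nn hu₂lap
  refine ⟨w, (hV₁f.inter_of_left V₂), fun x hx => ⟨hsupp₁ hx, hsupp₂ hx⟩, hwnn,
    fun x hx => hwout x hx, fun x hx => hwlap x hx, ?_, ?_⟩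
  · intro x hx
    exact hwout x (bdry_not_intr hx)
  · intro x hx
    obtain ⟨hxV, y, hxy, hyV⟩ := hx
    have hwx : w x = 0 := hwout x (bdry_not_intr ⟨hxV, y, hxy, hyV⟩)
    have hcase : (x ∈ bdry V₁ ∧ u₁ x = 0) ∨ (x ∈ bdry V₂ ∧ u₂ x = 0) := by
      rcases (by tauto : y ∉ V₁ ∨ y ∉ V₂) with hy | hy
      · left; exact ⟨⟨hxV.1, y, hxy, hy⟩, hu₁bd x ⟨hxV.1, y, hxy, hy⟩⟩
      · right; exact ⟨⟨hxV.2, y, hxy, hy⟩, hu₂bd x ⟨hxV.2, y, hxy, hy⟩⟩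
    rcases hcase with ⟨hxb, hux⟩ | ⟨hxb, hux⟩
    · have := lap_mono hwle₁ (x := x) (by rw [hwx, hux])
      have hκ1 := hu₁κ x hxb
      linarith
    · have := lap_mono hwle₂ (x := x) (by rw [hwx, hux])
      have hκ2 := hu₂κ x hxb
      linarith

/-! Subharmonic logarithmic barrier. -/

lemma prod_ineq {ι : Type*} (s : Finset ι) (a : ι → ℝ) (c : ℝ) (hc : 0 ≤ c)
    (h0 : ∀ i ∈ s, 0 ≤ a i) (h1 : ∀ i ∈ s, a i ≤ c) :
    c ^ s.card * (c - ∑ i ∈ s, a i) ≤ c * ∏ i ∈ s, (c - a i) := by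
  classical
  induction s using Finset.cons_induction with
  | empty => simp
  | cons j s hj ih =>
    have h0' : ∀ i ∈ s, 0 ≤ a i := fun i hi => h0 i (Finset.mem_cons_of_mem hi)
    have h1' : ∀ i ∈ s, a i ≤ c := fun i hi => h1 i (Finset.mem_cons_of_mem hi)
    have ihs := ih h0' h1'
    rw [Finset.card_cons, Finset.sum_cons, Finset.prod_cons]
    have haj0 : 0 ≤ a j := h0 j (Finset.mem_cons_self j s)
    have haj1 : a j ≤ c := h1 j (Finset.mem_cons_self j s)
    have hT0 : 0 ≤ ∑ i ∈ s, a i := Finset.sum_nonneg h0'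
    have hcpow : (0:ℝ) ≤ c ^ s.card := pow_nonneg hc _
    calc c ^ (s.card + 1) * (c - (a j + ∑ i ∈ s, a i))
        ≤ (c - a j) * (c ^ s.card * (c - ∑ i ∈ s, a i)) := by
          rw [pow_succ]
          nlinarith [mul_nonneg haj0 hT0]
      _ ≤ (c - a j) * (c * ∏ i ∈ s, (c - a i)) := by
          apply mul_le_mul_of_nonneg_left ihs (by linarith)
      _ = c * ((c - a j) * ∏ i ∈ s, (c - a i)) := by ring

noncomputable def ell : Site d → ℝ := fun x => Real.log (1 + ∑ i, ((x i : ℝ))^2)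

lemma sumsq_single (x : Site d) (i : Fin d) (ε : ℤ) :
    ∑ j, (((x + fun j' => if j' = i then ε else 0 : Site d) j : ℝ))^2
      = (∑ j, ((x j : ℝ))^2) + 2 * (ε : ℝ) * (x i : ℝ) + (ε : ℝ)^2 := by
  have h : ∀ j, (((x + fun j' => if j' = i then ε else 0 : Site d) j : ℝ))^2
      = ((x j : ℝ))^2 + (if j = i then 2 * (ε:ℝ) * (x j : ℝ) + (ε:ℝ)^2 else 0) := by
    intro j
    by_cases hj : j = i <;> simp [Pi.add_apply, hj] <;> push_cast <;> ring
  rw [Finset.sum_congr rfl fun j _ => h j, Finset.sum_add_distrib,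
    Finset.sum_ite_eq' Finset.univ i (fun j => 2 * (ε:ℝ) * (x j : ℝ) + (ε:ℝ)^2)]
  simp
  ring

lemma add_single_eq (x : Site d) (i : Fin d) :
    x + Pi.single i 1 = x + fun j' => if j' = i then (1:ℤ) else 0 := by
  funext j; by_cases hj : j = i <;> simp [hj, single_apply']

lemma sub_single_eq (x : Site d) (i : Fin d) :
    x - Pi.single i 1 = x + fun j' => if j' = i then (-1:ℤ) else 0 := by
  funext j; by_cases hj : j = i <;> simp [hj, single_apply'] <;> try omega

lemma lap_ell_pos (hd2 : 2 ≤ d) (x : Site d) : 0 < lap ell x := by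
  have hd : 0 < d := by omega
  set S : ℝ := 1 + ∑ i, ((x i : ℝ))^2 with hSdef
  have hsq : ∀ i : Fin d, ((x i : ℝ))^2 ≤ ∑ j, ((x j : ℝ))^2 :=
    fun i => Finset.single_le_sum (f := fun j => ((x j : ℝ))^2)
      (fun j _ => sq_nonneg _) (Finset.mem_univ i)
  have hS1 : 1 ≤ S := by
    have : (0:ℝ) ≤ ∑ i, ((x i : ℝ))^2 := Finset.sum_nonneg fun i _ => sq_nonneg _
    linarith
  have hApos : ∀ i : Fin d, 0 < S + 2 * (x i : ℝ) + 1 ∧ 0 < S - 2 * (x i : ℝ) + 1 := by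
    intro i
    have := hsq i
    constructor <;> nlinarith [sq_nonneg ((x i : ℝ) + 1), sq_nonneg ((x i : ℝ) - 1)]
  have hellp : ∀ i : Fin d, ell (x + Pi.single i 1) = Real.log (S + 2 * (x i : ℝ) + 1) := by
    intro i
    unfold ell
    rw [add_single_eq, sumsq_single, hSdef]
    congr 1
    ring
  have hellm : ∀ i : Fin d, ell (x - Pi.single i 1) = Real.log (S - 2 * (x i : ℝ) + 1) := by
    intro i
    unfold ell
    rw [sub_single_eq, sumsq_single, hSdef]
    congr 1
    push_cast
    ring
  have hellx : ell x = Real.log S := rfl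
  unfold lap
  apply mul_pos (by positivity)
  -- rewrite each term
  have hterm : ∀ i : Fin d,
      ((ell (x + Pi.single i 1) - ell x) + (ell (x - Pi.single i 1) - ell x))
        = Real.log ((S+1)^2 - 4 * ((x i : ℝ))^2) - Real.log (S^2) := by
    intro i
    rw [hellp i, hellm i, hellx]
    have h1 := (hApos i).1
    have h2 := (hApos i).2
    rw [show (S+1)^2 - 4 * ((x i : ℝ))^2 = (S + 2*(x i : ℝ) + 1) * (S - 2*(x i : ℝ) + 1) by ring,
      Real.log_mul (ne_of_gt h1) (ne_of_gt h2),
      show S^2 = S * S by ring, Real.log_mul (by linarith) (by linarith)]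
    ring
  rw [Finset.sum_congr rfl fun i _ => hterm i, Finset.sum_sub_distrib]
  have hPpos : ∀ i : Fin d, 0 < (S+1)^2 - 4 * ((x i : ℝ))^2 := by
    intro i
    have h1 := (hApos i).1
    have h2 := (hApos i).2
    nlinarith
  rw [← Real.log_prod (fun i _ => ne_of_gt (hPpos i)), Finset.sum_const,
    Finset.card_univ, Fintype.card_fin, nsmul_eq_mul, ← Real.log_pow]
  rw [sub_pos]
  apply Real.log_lt_log (by positivity)
  -- the key product inequality
  set c : ℝ := (S+1)^2 with hcdef
  have hc0 : (0:ℝ) ≤ c := by positivity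
  have hT : ∑ i, 4 * ((x i : ℝ))^2 = 4 * (S - 1) := by
    rw [← Finset.mul_sum]
    rw [hSdef]; ring
  have hai_le : ∀ i : Fin d, 4 * ((x i : ℝ))^2 ≤ c := by
    intro i
    have := hsq i
    nlinarith
  have hkey := prod_ineq Finset.univ (fun i => 4 * ((x i : ℝ))^2) c hc0
    (fun i _ => by positivity) (fun i _ => hai_le i)
  rw [hT, Finset.card_univ, Fintype.card_fin] at hkey
  -- exponent bookkeeping
  obtain ⟨k, hk⟩ : ∃ k, 2 * d = k + 4 := ⟨2 * d - 4, by omega⟩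
  have hcd : c ^ d = (S+1) ^ (2*d) := by rw [hcdef, ← pow_mul, mul_comm]
  have hSd : ((S^2):ℝ) ^ d = S ^ (2*d) := by rw [← pow_mul, mul_comm]
  have hmono : (S:ℝ) ^ k ≤ (S+1) ^ k := pow_le_pow_left₀ (by linarith) (by linarith) k
  have hfinal : c * (S^2)^d < c^d * (c - 4*(S-1)) := by
    rw [hcd, hSd, hk, pow_add, pow_add]
    have hstep : (S+1)^4 * ((S+1)^2 - 4*(S-1)) - (S+1)^2 * S^4 = (S+1)^2 * (2*S^2 + 8*S + 5) := by
      ring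
    have hcore : (S+1)^2 * S^4 < (S+1)^4 * ((S+1)^2 - 4*(S-1)) := by nlinarith
    have hSkpos : (0:ℝ) < S ^ k := by positivity
    calc (S+1)^2 * (S^k * S^4) = S^k * ((S+1)^2 * S^4) := by ring
      _ < S^k * ((S+1)^4 * ((S+1)^2 - 4*(S-1))) := by
          apply mul_lt_mul_of_pos_left hcore hSkpos
      _ ≤ (S+1)^k * ((S+1)^4 * ((S+1)^2 - 4*(S-1))) := by
          have hq : (0:ℝ) ≤ (S+1)^2 - 4*(S-1) := by nlinarith [sq_nonneg (S-1)]
          exact mul_le_mul_of_nonneg_right hmono (mul_nonneg (by positivity) hq)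
      _ = (S+1)^k * (S+1)^4 * ((S+1)^2 - 4*(S-1)) := by ring
  have hcpos : (0:ℝ) < c := by positivity
  have := lt_of_lt_of_le hfinal hkey
  exact lt_of_mul_lt_mul_left this (le_of_lt hcpos)

lemma lap_const (c : ℝ) (x : Site d) : lap (fun _ => c) x = 0 := by
  simp [lap]

lemma lap_coord (j : Fin d) (x : Site d) : lap (fun y => ((y j : ℤ) : ℝ)) x = 0 := by
  unfold lap
  have h : ∀ i : Fin d,
      ((((x + Pi.single i 1 : Site d) j) : ℝ) - ((x j : ℤ):ℝ))
        + ((((x - Pi.single i 1 : Site d) j) : ℝ) - ((x j:ℤ):ℝ)) = 0 := by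
    intro i
    by_cases hj : j = i
    · subst hj
      simp only [Pi.add_apply, Pi.sub_apply, single_apply', if_pos rfl]
      push_cast
      ring
    · simp only [Pi.add_apply, Pi.sub_apply, single_apply', if_neg hj]
      push_cast
      ring
  rw [Finset.sum_congr rfl fun i _ => h i]
  simp

lemma ell_nonneg (x : Site d) : 0 ≤ ell x := by
  unfold ell
  apply Real.log_nonneg
  have : (0:ℝ) ≤ ∑ i, ((x i : ℝ))^2 := Finset.sum_nonneg fun i _ => sq_nonneg _
  linarith

/-! Existence of a stabilizing pair on a large box. -/

lemma nbr_coord {y z : Site d} (hz : nbr y z) (j : Fin d) :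
    z j = y j ∨ z j = y j + 1 ∨ z j = y j - 1 := by
  obtain ⟨i, rfl | rfl⟩ := nbr_iff.mp hz
  · by_cases hij : j = i
    · subst hij; right; left; simp [Pi.add_apply, single_apply']
    · left; simp [Pi.add_apply, single_apply', hij]
  · by_cases hij : j = i
    · subst hij; right; right; simp [Pi.sub_apply, single_apply']
    · left; simp [Pi.sub_apply, single_apply', hij]

set_option maxHeartbeats 1600000 in
lemma exists_stabilizing (hd2 : 2 ≤ d) (μ0 : Site d → ℝ) (hμ0 : IsMassDist μ0)
    (κ : ℝ) (hκ : 0 < κ) : ∃ V u, IsStabilizingPair μ0 κ V u := by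
  classical
  have hd : 0 < d := by omega
  obtain ⟨hμnn, hμfin⟩ := hμ0
  set F := hμfin.toFinset with hF
  -- a radius containing the support
  set r0 : ℕ := F.sup (fun x => Finset.univ.sup fun i => (x i).natAbs) with hr0
  clear_value r0
  have hr0prop : ∀ x : Site d, μ0 x ≠ 0 → ∀ i, (x i).natAbs ≤ r0 := by
    intro x hx i
    have hxF : x ∈ F := hμfin.mem_toFinset.mpr hx
    have h1 : (x i).natAbs ≤ Finset.univ.sup (fun i => (x i).natAbs) :=
      Finset.le_sup (f := fun i => (x i).natAbs) (Finset.mem_univ i)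
    have h2 : Finset.univ.sup (fun i => (x i).natAbs) ≤ r0 := by
      rw [hr0]
      exact Finset.le_sup (f := fun x : Site d => Finset.univ.sup fun i => (x i).natAbs) hxF
    exact le_trans h1 h2
  -- the constant B
  set B : ℝ := ∑ x ∈ F, μ0 x / lap ell x with hB
  clear_value B
  have hB0 : 0 ≤ B := by
    rw [hB]
    exact Finset.sum_nonneg fun x _ => div_nonneg (hμnn x) (lap_ell_pos hd2 x).le
  have hBprop : ∀ x : Site d, μ0 x ≤ B * lap ell x := by
    intro x
    by_cases hx : μ0 x = 0
    · rw [hx]; exact mul_nonneg hB0 (lap_ell_pos hd2 x).le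
    · have hxF : x ∈ F := hμfin.mem_toFinset.mpr hx
      have h1 : μ0 x / lap ell x ≤ B := by
        rw [hB]
        exact Finset.single_le_sum (f := fun y => μ0 y / lap ell y)
          (fun y _ => div_nonneg (hμnn y) (lap_ell_pos hd2 y).le) hxF
      have hl := lap_ell_pos hd2 x
      calc μ0 x = (μ0 x / lap ell x) * lap ell x := by field_simp
        _ ≤ B * lap ell x := mul_le_mul_of_nonneg_right h1 hl.le
  clear hB hr0 hF
  -- choose the box radius R
  obtain ⟨R, hRr0, hRlog⟩ : ∃ R : ℕ, (r0 + 2 ≤ R) ∧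
      B * Real.log (1 + d * (R:ℝ)^2) ≤ κ * ((R:ℝ) - r0) := by
    obtain ⟨N, hN⟩ := exists_nat_ge
      ((2/κ) * (2*B*Real.log (1+Real.sqrt d) + 8*B^2/κ + κ*r0))
    refine ⟨max N (r0+2), le_max_right _ _, ?_⟩
    set R' : ℕ := max N (r0+2)
    have hR0 : (0:ℝ) ≤ (R':ℝ) := Nat.cast_nonneg _
    have hsd0 : (0:ℝ) ≤ Real.sqrt d := Real.sqrt_nonneg _
    have hlog1 : Real.log (1 + d * (R':ℝ)^2) ≤ 2 * Real.log (1 + Real.sqrt d * R') := by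
      have hsq : Real.sqrt d ^ 2 = (d:ℝ) := Real.sq_sqrt (Nat.cast_nonneg d)
      have harg : 1 + (d:ℝ) * (R':ℝ)^2 ≤ (1 + Real.sqrt d * R')^2 := by nlinarith
      calc Real.log (1 + d * (R':ℝ)^2) ≤ Real.log ((1 + Real.sqrt d * R')^2) :=
            Real.log_le_log (by positivity) harg
        _ = 2 * Real.log (1 + Real.sqrt d * R') := by
            rw [Real.log_pow]; norm_num
    have hlog2 : Real.log (1 + Real.sqrt d * R')
        ≤ Real.log (1 + Real.sqrt d) + Real.log (1 + (R':ℝ)) := by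
      have harg : 1 + Real.sqrt d * R' ≤ (1 + Real.sqrt d) * (1 + (R':ℝ)) := by nlinarith
      calc Real.log (1 + Real.sqrt d * R') ≤ Real.log ((1 + Real.sqrt d) * (1 + (R':ℝ))) :=
            Real.log_le_log (by positivity) harg
        _ = Real.log (1 + Real.sqrt d) + Real.log (1 + (R':ℝ)) :=
            Real.log_mul (by positivity) (by positivity)
    have hlog3 : Real.log (1 + (R':ℝ)) ≤ 2 * Real.sqrt R' := by
      have h1 : Real.log (Real.sqrt (1 + (R':ℝ))) ≤ Real.sqrt (1 + (R':ℝ)) - 1 :=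
        Real.log_le_sub_one_of_pos (by positivity)
      have h2 : Real.log (Real.sqrt (1 + (R':ℝ))) = Real.log (1 + (R':ℝ)) / 2 :=
        Real.log_sqrt (by positivity)
      have h3 : Real.sqrt (1 + (R':ℝ)) ≤ 1 + Real.sqrt R' := by
        rw [show (1:ℝ) + Real.sqrt R' = Real.sqrt ((1 + Real.sqrt R')^2) by
          rw [Real.sqrt_sq (by positivity)]]
        apply Real.sqrt_le_sqrt
        nlinarith [Real.sq_sqrt hR0, Real.sqrt_nonneg (R':ℝ)]
      have h4 : (0:ℝ) ≤ Real.sqrt R' := Real.sqrt_nonneg _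
      linarith
    have hamgm : 4 * B * Real.sqrt R' ≤ 8 * B^2 / κ + κ * R' / 2 := by
      have hsq := Real.sq_sqrt hR0
      have h5 : κ * (4 * B * Real.sqrt R') ≤ κ * (8 * B^2 / κ + κ * R' / 2) := by
        have hexp : κ * (8 * B^2 / κ + κ * R' / 2) = 8 * B^2 + κ^2 * R' / 2 := by
          field_simp
        rw [hexp]
        nlinarith [sq_nonneg (4 * B - κ * Real.sqrt R'), Real.sqrt_nonneg (R':ℝ)]
      exact le_of_mul_le_mul_left h5 hκ
    have hN' : ((2/κ) * (2*B*Real.log (1+Real.sqrt d) + 8*B^2/κ + κ*r0)) ≤ (R':ℝ) := by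
      calc _ ≤ (N:ℝ) := hN
        _ ≤ (R':ℝ) := by exact_mod_cast Nat.cast_le.mpr (le_max_left N (r0+2))
    have hhalf : 2*B*Real.log (1+Real.sqrt d) + 8*B^2/κ + κ*r0 ≤ κ * R' / 2 := by
      have hmm := mul_le_mul_of_nonneg_left hN' (le_of_lt hκ)
      have h6 : (2/κ) * κ = 2 := div_mul_cancel₀ 2 hκ.ne'
      have h7 : κ * ((2/κ) * (2*B*Real.log (1+Real.sqrt d) + 8*B^2/κ + κ*r0))
          = ((2/κ) * κ) * (2*B*Real.log (1+Real.sqrt d) + 8*B^2/κ + κ*r0) := by ring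
      rw [h7, h6] at hmm
      linarith
    have hlogd0 : 0 ≤ Real.log (1 + Real.sqrt d) := Real.log_nonneg (by linarith)
    have hsR0 : 0 ≤ Real.sqrt (R':ℝ) := Real.sqrt_nonneg _
    calc B * Real.log (1 + d * (R':ℝ)^2)
        ≤ B * (2 * (Real.log (1 + Real.sqrt d) + 2 * Real.sqrt R')) := by
          apply mul_le_mul_of_nonneg_left _ hB0
          calc Real.log (1 + d * (R':ℝ)^2) ≤ 2 * Real.log (1 + Real.sqrt d * R') := hlog1
            _ ≤ 2 * (Real.log (1 + Real.sqrt d) + Real.log (1 + (R':ℝ))) := by linarith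
            _ ≤ 2 * (Real.log (1 + Real.sqrt d) + 2 * Real.sqrt R') := by linarith
      _ = 2*B*Real.log (1+Real.sqrt d) + 4*B*Real.sqrt R' := by ring
      _ ≤ 2*B*Real.log (1+Real.sqrt d) + (8*B^2/κ + κ*R'/2) := by linarith
      _ ≤ κ * R' / 2 + κ * R' / 2 - κ*r0 := by linarith
      _ = κ * ((R':ℝ) - r0) := by ring
  -- the box
  obtain ⟨Q, hmemQ⟩ : ∃ Q : Set (Site d), ∀ x : Site d, x ∈ Q ↔ ∀ i, (x i).natAbs ≤ R :=
    ⟨{x | ∀ i, (x i).natAbs ≤ R}, fun _ => Iff.rfl⟩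
  have hQfin : Q.Finite := by
    apply Set.Finite.subset (Set.Finite.pi (fun i : Fin d => Set.finite_Icc (-(R:ℤ)) R))
    intro x hx
    rw [Set.mem_univ_pi]
    intro i
    rw [Set.mem_Icc]
    have := (hmemQ x).mp hx i
    omega
  have hintrQ : ∀ x : Site d, x ∈ intr Q ↔ ∀ i, (x i).natAbs ≤ R - 1 := by
    intro x
    rw [mem_intr]
    constructor
    · rintro ⟨hxQ, hall⟩ i
      by_contra hcon
      have hxi : (x i).natAbs = R := by have := (hmemQ x).mp hxQ i; omega
      have hy1 := (hmemQ _).mp (hall _ (nbr_add_single x i)) i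
      have hy2 := (hmemQ _).mp (hall _ (nbr_sub_single x i)) i
      simp only [Pi.add_apply, Pi.sub_apply, single_apply', eq_self_iff_true, if_true] at hy1 hy2
      omega
    · intro hsmall
      refine ⟨(hmemQ x).mpr fun i => by have := hsmall i; omega, ?_⟩
      intro y hy
      rw [hmemQ y]
      intro i
      rcases nbr_coord hy i with h | h | h <;> (have := hsmall i; omega)
  set D : Set (Site d) := intr Q with hDdef
  have hDfin : D.Finite := hQfin.subset (fun x hx => hx.1)
  obtain ⟨w, hwout, hwlap⟩ := dirichlet hd hDfin (fun x => -μ0 x)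
  -- nonnegativity
  have hwnn : ∀ x, 0 ≤ w x := by
    have hmp := maxPrinciple hd hDfin (-w)
      (fun x hx => by rw [lap_neg, hwlap x hx]; simpa using hμnn x)
      (fun x hx _ _ _ => by simp [hwout x hx])
    intro x
    by_cases hx : x ∈ D
    · have := hmp x hx; simp at this; exact this
    · rw [hwout x hx]
  -- global sup bound via the log barrier
  set L : ℝ := Real.log (1 + d * (R:ℝ)^2) with hL
  clear_value L
  have hL0 : 0 ≤ L := by
    rw [hL]
    exact Real.log_nonneg (le_add_of_nonneg_right (by positivity))
  have hellL : ∀ x : Site d, (∀ i, (x i).natAbs ≤ R) → ell x ≤ L := by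
    intro x hx
    unfold ell
    rw [hL]
    apply Real.log_le_log (by positivity)
    have hterm : ∀ i : Fin d, ((x i : ℝ))^2 ≤ (R:ℝ)^2 := by
      intro i
      have h0 : (x i) * (x i) ≤ (R:ℤ) * (R:ℤ) := by
        have h01 := hx i
        have h02 : x i ≤ (R:ℤ) := by omega
        have h03 : -(R:ℤ) ≤ x i := by omega
        nlinarith
      have h1 : ((x i : ℝ)) * ((x i : ℝ)) ≤ (R:ℝ) * (R:ℝ) := by exact_mod_cast h0
      nlinarith
    have hsum : ∑ i, ((x i : ℝ))^2 ≤ d * (R:ℝ)^2 := by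
      calc ∑ i, ((x i : ℝ))^2 ≤ ∑ _i : Fin d, (R:ℝ)^2 :=
            Finset.sum_le_sum fun i _ => hterm i
        _ = d * (R:ℝ)^2 := by rw [Finset.sum_const, Finset.card_univ, Fintype.card_fin,
              nsmul_eq_mul]
    linarith
  have hQnbr : ∀ y ∈ D, ∀ x : Site d, nbr y x → ∀ i, (x i).natAbs ≤ R := by
    intro y hy x hxy i
    have hyb := (hintrQ y).mp hy
    rcases nbr_coord hxy i with h | h | h <;> (have := hyb i; omega)
  have hlap_sBar : ∀ x : Site d, lap (fun y => B * L - B * ell y) x = - (B * lap ell x) := by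
    intro x
    have heq : (fun y : Site d => B * L - B * ell y) = (fun _ => B * L) - B • ell := by
      funext y; simp [Pi.sub_apply, Pi.smul_apply, smul_eq_mul]
    rw [heq, lap_sub, lap_const, lap_smul]
    ring
  have hsup : ∀ x ∈ D, w x ≤ B * L := by
    have hmp := maxPrinciple hd hDfin (w - fun y => B * L - B * ell y)
      (fun x hx => by
        rw [lap_sub, hwlap x hx, hlap_sBar]
        have := hBprop x
        linarith)
      (fun x hx y hy hnbr => by
        simp only [Pi.sub_apply]
        rw [hwout x hx]
        have hxQ := hQnbr y hy x hnbr
        have h1 := hellL x hxQ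
        have hBe : B * ell x ≤ B * L := mul_le_mul_of_nonneg_left h1 hB0
        linarith)
    intro x hx
    have h1 := hmp x hx
    simp only [Pi.sub_apply] at h1
    have h2 : 0 ≤ B * ell x := mul_nonneg hB0 (ell_nonneg x)
    linarith
  -- face barrier
  have hRr0R : (0:ℝ) < (R:ℝ) - (r0:ℝ) := by
    have h1 : (r0:ℝ) + 2 ≤ (R:ℝ) := by exact_mod_cast hRr0
    linarith
  set cc : ℝ := B * L / ((R:ℝ) - r0) with hcc
  clear_value cc
  have hcc0 : 0 ≤ cc := by
    rw [hcc]
    exact div_nonneg (mul_nonneg hB0 hL0) hRr0R.le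
  have hccκ : cc ≤ κ := by
    rw [hcc, div_le_iff₀ hRr0R]
    exact hRlog
  have hface : ∀ (j : Fin d) (σ : ℤ), (σ = 1 ∨ σ = -1) → ∀ y ∈ D,
      ((r0:ℤ) < σ * y j) → w y ≤ cc * ((R:ℝ) - (σ:ℝ) * ((y j : ℤ):ℝ)) := by
    intro j σ hσ
    obtain ⟨Df, hmemDf⟩ : ∃ Df : Set (Site d), ∀ x : Site d,
        x ∈ Df ↔ x ∈ D ∧ (r0:ℤ) < σ * x j :=
      ⟨{x | x ∈ D ∧ (r0:ℤ) < σ * x j}, fun _ => Iff.rfl⟩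
    have hDffin : Df.Finite := hDfin.subset fun x hx => ((hmemDf x).mp hx).1
    have hlapbar : ∀ x, lap (fun y => cc * (R:ℝ) - (cc * (σ:ℝ)) * ((y j : ℤ):ℝ)) x = 0 := by
      intro x
      have heq : (fun y : Site d => cc * (R:ℝ) - (cc * (σ:ℝ)) * ((y j : ℤ):ℝ))
          = (fun _ => cc * (R:ℝ)) - (cc * (σ:ℝ)) • (fun y : Site d => ((y j : ℤ):ℝ)) := by
        funext y; simp [Pi.sub_apply, Pi.smul_apply, smul_eq_mul]
      rw [heq, lap_sub, lap_const, lap_smul, lap_coord]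
      ring
    have habsσ : ∀ z : ℤ, σ * z ≤ (z.natAbs : ℤ) := by
      intro z
      rcases hσ with h | h <;> subst h <;> omega
    have hmp := maxPrinciple hd hDffin (w - fun y => cc * (R:ℝ) - (cc * (σ:ℝ)) * ((y j : ℤ):ℝ))
      (fun x hx => by
        have hx' := (hmemDf x).mp hx
        have hμx : μ0 x = 0 := by
          by_contra hc
          have h1 := hr0prop x hc j
          have h2 := hx'.2
          have h3 := habsσ (x j)
          omega
        rw [lap_sub, hwlap x hx'.1, hlapbar, hμx]
        simp)
      (fun x hx y hy hnbr => by
        simp only [Pi.sub_apply]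
        have hy' := (hmemDf y).mp hy
        have hxQ := hQnbr y hy'.1 x hnbr
        have hσxj : (σ:ℝ) * ((x j : ℤ):ℝ) ≤ (R:ℝ) := by
          have h1 : σ * x j ≤ (R:ℤ) := by
            have := habsσ (x j); have := hxQ j; omega
          exact_mod_cast h1
        by_cases hxD : x ∈ D
        · have hxj : σ * x j ≤ (r0:ℤ) := by
            by_contra hc
            exact hx ((hmemDf x).mpr ⟨hxD, by omega⟩)
          have h1 : w x ≤ B * L := hsup x hxD
          have h2 : (σ:ℝ) * ((x j : ℤ):ℝ) ≤ (r0:ℝ) := by exact_mod_cast hxj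
          have h3 : B * L ≤ cc * ((R:ℝ) - (σ:ℝ) * ((x j : ℤ):ℝ)) := by
            have h4 : B * L = cc * ((R:ℝ) - r0) := by
              rw [hcc]; field_simp
            rw [h4]
            apply mul_le_mul_of_nonneg_left _ hcc0
            linarith
          nlinarith
        · rw [hwout x hxD]
          nlinarith)
    intro y hyD hyj
    have h1 := hmp y ((hmemDf y).mpr ⟨hyD, hyj⟩)
    simp only [Pi.sub_apply] at h1
    nlinarith
  -- assemble the stabilizing pair
  refine ⟨Q, w, hQfin, ?_, hwnn, hwout, fun x hx => by rw [hwlap x hx], ?_, ?_⟩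
  · intro x hx
    rw [hmemQ x]
    intro i
    have := hr0prop x hx i
    omega
  · intro x hx
    exact hwout x (bdry_not_intr hx)
  · intro x hx
    have hxQ : x ∈ Q := hx.1
    have hxni : x ∉ intr Q := bdry_not_intr hx
    obtain ⟨j, hj⟩ : ∃ j, (x j).natAbs = R := by
      by_contra hc
      push_neg at hc
      exact hxni ((hintrQ x).mpr fun i => by
        have h1 := (hmemQ x).mp hxQ i; have h2 := hc i; omega)
    have hμx : μ0 x = 0 := by
      by_contra hc
      have := hr0prop x hc j
      omega
    have hwx : w x = 0 := hwout x hxni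
    -- every neighbour of x has w ≤ κ
    have hznbr : ∀ z : Site d, nbr x z → w z ≤ κ := by
      intro z hz
      by_cases hzD : z ∈ D
      · have hzb := (hintrQ z).mp hzD
        set σ : ℤ := if 0 ≤ x j then 1 else -1 with hσdef
        have hσ : σ = 1 ∨ σ = -1 := by
          by_cases h0 : 0 ≤ x j <;> simp [hσdef, h0]
        have hxσ : x j = σ * R := by
          rw [hσdef]
          split_ifs with h0 <;> omega
        have hσz : σ * z j = (R:ℤ) - 1 := by
          have hc := nbr_coord hz j
          have hzbj := hzb j
          rcases hσ with h | h <;> rw [h] at hxσ ⊢ <;> rcases hc with h2 | h2 | h2 <;> omega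
        have hr0σ : (r0:ℤ) < σ * z j := by
          rw [hσz]; omega
        have hfz := hface j σ hσ z hzD hr0σ
        have hcast : (σ:ℝ) * ((z j : ℤ):ℝ) = (R:ℝ) - 1 := by
          have := congrArg (fun t : ℤ => (t:ℝ)) hσz
          push_cast at this
          linarith [this]
        rw [hcast] at hfz
        calc w z ≤ cc * ((R:ℝ) - ((R:ℝ) - 1)) := hfz
          _ = cc := by ring
          _ ≤ κ := hccκ
      · rw [hwout z hzD]
        exact hκ.le
    have hlapw : lap w x ≤ κ := by
      unfold lap
      have hterm : ∀ i : Fin d,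
          ((w (x + Pi.single i 1) - w x) + (w (x - Pi.single i 1) - w x)) ≤ 2*κ := by
        intro i
        have h1 := hznbr _ (nbr_add_single x i)
        have h2 := hznbr _ (nbr_sub_single x i)
        rw [hwx]; linarith
      have hsum : ∑ i : Fin d, ((w (x + Pi.single i 1) - w x) + (w (x - Pi.single i 1) - w x))
          ≤ ∑ _i : Fin d, 2*κ := Finset.sum_le_sum fun i _ => hterm i
      have hconst : ∑ _i : Fin d, (2*κ) = d * (2*κ) := by
        rw [Finset.sum_const, Finset.card_univ, Fintype.card_fin, nsmul_eq_mul]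
      have hdpos : (0:ℝ) < d := by exact_mod_cast hd
      calc (1/(2*(d:ℝ))) * ∑ i : Fin d, ((w (x + Pi.single i 1) - w x) + (w (x - Pi.single i 1) - w x))
          ≤ (1/(2*(d:ℝ))) * (d * (2*κ)) := by
            apply mul_le_mul_of_nonneg_left _ (by positivity)
            rw [← hconst]
            exact hsum
        _ = κ := by field_simp
    rw [hμx, zero_add]
    exact hlapw

/-- Let `μ₀` be a mass distribution on `ℤ^d` with finite support and
`κ > 0`. If `(V₁, u₁)` and `(V₂, u₂)` are stabilizing pairs for `BS(μ₀, κ)`, then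
there is a function `w` such that `(V₁ ∩ V₂, w)` is a stabilizing pair for `BS(μ₀, κ)`.
Consequently, there exists a stabilizing pair `(V_*, u_*)` for `BS(μ₀, κ)` with
`V_* ⊆ V` for every stabilizing pair `(V, u)`. -/
theorem stmt6 {d : ℕ} (hd : 2 ≤ d) (μ0 : Site d → ℝ) (hμ0 : IsMassDist μ0)
    (κ : ℝ) (hκ : 0 < κ) :
    (∀ (V₁ V₂ : Set (Site d)) (u₁ u₂ : Site d → ℝ),
      IsStabilizingPair μ0 κ V₁ u₁ → IsStabilizingPair μ0 κ V₂ u₂ →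
      ∃ w : Site d → ℝ, IsStabilizingPair μ0 κ (V₁ ∩ V₂) w) ∧
    ∃ (Vs : Set (Site d)) (us : Site d → ℝ), IsMinStabilizingPair μ0 κ Vs us := by
  classical
  have hd0 : 0 < d := by omega
  have hpart1 : ∀ (V₁ V₂ : Set (Site d)) (u₁ u₂ : Site d → ℝ),
      IsStabilizingPair μ0 κ V₁ u₁ → IsStabilizingPair μ0 κ V₂ u₂ →
      ∃ w : Site d → ℝ, IsStabilizingPair μ0 κ (V₁ ∩ V₂) w :=
    fun V₁ V₂ u₁ u₂ h₁ h₂ => inter_stabilizing hd0 μ0 hμ0 κ hκ V₁ V₂ u₁ u₂ h₁ h₂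
  refine ⟨hpart1, ?_⟩
  obtain ⟨V₀, u₀, h₀⟩ := exists_stabilizing hd μ0 hμ0 κ hκ
  have hex : ∃ n : ℕ, ∃ V : Set (Site d), ∃ u : Site d → ℝ,
      IsStabilizingPair μ0 κ V u ∧ V.ncard = n := ⟨V₀.ncard, V₀, u₀, h₀, rfl⟩
  obtain ⟨Vs, us, hVs, hcard⟩ := Nat.find_spec hex
  refine ⟨Vs, us, hVs, ?_⟩
  intro V' u' hV'
  obtain ⟨w, hw⟩ := hpart1 Vs V' us u' hVs hV'
  have hle : Nat.find hex ≤ (Vs ∩ V').ncard :=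
    Nat.find_min' hex ⟨Vs ∩ V', w, hw, rfl⟩
  have heq : Vs ∩ V' = Vs := by
    apply Set.eq_of_subset_of_ncard_le Set.inter_subset_left _ hVs.1
    rw [hcard]
    exact hle
  intro x hx
  rw [← heq] at hx
  exact hx.2

end Sandpile
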